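/- Let W be a real-valued random variable with conditional density f(w | X = x) given X = x that is continuously differentiable in w, vanishing at ±∞, and let m(x, w) be continuously differentiable and bounded with bounded derivative in w. Define g(x, w) = −∂/∂w [log f(w | x)]. Then E[ ∂m/∂w (X, W) | X = x ] = E[ g(X, W) m(X, W) | X = x ]. -/

import Mathlib

open MeasureTheory Filter

/-- Powell–Stock–Stoker integration by parts: if `f` is a positive `C¹` density on `ℝ`
vanishing at `±∞` with integrable derivative, `m` is `C¹`, bounded with bounded derivative,
and `g(w) = -d/dw log f(w)`, then `∫ m'(w) f(w) dw = ∫ g(w) m(w) f(w) dw`. -/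
theorem average_derivative_weighting_identity (f m : ℝ → ℝ)
    (hfpos : ∀ w, 0 < f w)
    (hfint : Integrable f) (hfdens : ∫ w, f w = 1)
    (hfC1 : ContDiff ℝ 1 f) (hf'int : Integrable (deriv f))
    (hftop : Tendsto f atTop (nhds 0)) (hfbot : Tendsto f atBot (nhds 0))
    (hmC1 : ContDiff ℝ 1 m)
    (C : ℝ) (hmb : ∀ w, |m w| ≤ C) (hm'b : ∀ w, |deriv m w| ≤ C) :
    ∫ w, deriv m w * f w =
      ∫ w, (-(deriv (fun v => Real.log (f v)) w)) * m w * f w := by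
  have hfd : ∀ x, HasDerivAt f (deriv f x) x := fun x =>
    (hfC1.differentiable one_ne_zero x).hasDerivAt
  have hmd : ∀ x, HasDerivAt m (deriv m x) x := fun x =>
    (hmC1.differentiable one_ne_zero x).hasDerivAt
  have hlog : ∀ w, (-(deriv (fun v => Real.log (f v)) w)) * m w * f w
      = -(m w * deriv f w) := by
    intro w
    have h : HasDerivAt (fun v => Real.log (f v)) (deriv f w / f w) w :=
      (hfd w).log (hfpos w).ne'
    rw [h.deriv, neg_mul, neg_mul, div_mul_eq_mul_div, div_mul_cancel₀ _ (hfpos w).ne']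
    ring
  rw [integral_congr_ae (Filter.Eventually.of_forall hlog)]
  have hmmeas : AEStronglyMeasurable m volume :=
    hmC1.continuous.aestronglyMeasurable
  have hm'meas : AEStronglyMeasurable (deriv m) volume :=
    (hmC1.continuous_deriv le_rfl).aestronglyMeasurable
  have huv' : Integrable (m * deriv f) :=
    hf'int.bdd_mul (c := C) hmmeas (Filter.Eventually.of_forall fun x => (Real.norm_eq_abs _).le.trans (hmb x))
  have hu'v : Integrable (deriv m * f) :=
    hfint.bdd_mul (c := C) hm'meas (Filter.Eventually.of_forall fun x => (Real.norm_eq_abs _).le.trans (hm'b x))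
  have hbd : ∀ w, ‖m w * f w‖ ≤ C * f w := by
    intro w
    rw [Real.norm_eq_abs, abs_mul, abs_of_pos (hfpos w)]
    exact mul_le_mul_of_nonneg_right (hmb w) (hfpos w).le
  have htop : Tendsto (m * f) atTop (nhds 0) :=
    squeeze_zero_norm hbd (by simpa using hftop.const_mul C)
  have hbot : Tendsto (m * f) atBot (nhds 0) :=
    squeeze_zero_norm hbd (by simpa using hfbot.const_mul C)
  have key := MeasureTheory.integral_mul_deriv_eq_deriv_mul (fun x _ => hmd x) (fun x _ => hfd x) huv' hu'v hbot htop
  simp only [sub_zero, zero_sub] at key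
  rw [integral_neg, key, neg_neg]
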